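/- arXiv:0807.3540 — 2 statements merged into one kernel-verified Lean document; each statement's English description precedes it below -/
import Mathlib

section
/- Let $\phi_w : [-1,1] \to \mathbb{R}$ be continuous with $|\phi_w| \le 1$ and satisfy $\phi_w(1-t) = A t^{\alpha} + o(t^{\alpha})$ as $t \downarrow 0$ for some $A \in \mathbb{R}$ and $\alpha \ge 0$. Let $\lambda > 1$, $\mu > 0$, $\lambda_0 \in \mathbb{R}$. Then as $h \downarrow 0$, $\int_{\epsilon}^{1} \phi_w(s)\, s^{-\lambda_0} \exp\big(s^{\lambda}/(\mu h^{\lambda})\big)\,ds \sim A\,\Gamma(\alpha+1)\,\Big(\frac{\mu}{\lambda}\,h^{\lambda}\Big)^{1+\alpha}\, e^{1/(\mu h^{\lambda})}$ for any fixed $0 < \epsilon < 1$. -/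
set_option autoImplicit false
set_option maxHeartbeats 1000000
open MeasureTheory Real Filter Topology

private lemma laplace_key
    (φw : ℝ → ℝ) (hφw_cont : ContinuousOn φw (Set.Icc (-1) 1))
    (hφw_bd : ∀ t ∈ Set.Icc (-1:ℝ) 1, |φw t| ≤ 1)
    (A α : ℝ) (hα : 0 ≤ α)
    (hφw_asymp : Tendsto (fun t : ℝ => (φw (1 - t) - A * t ^ α) / t ^ α)
      (nhdsWithin 0 (Set.Ioi 0)) (nhds 0))
    (lam lam₀ : ℝ) (hlam : 1 < lam)
    (ε : ℝ) (hε0 : 0 < ε) (hε1 : ε < 1) :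
    Tendsto (fun c : ℝ =>
        ((lam * c) ^ (1 + α) * Real.exp (-c)) *
          ∫ s in ε..1, φw s * s ^ (-lam₀) * Real.exp (c * s ^ lam))
      atTop (nhds (A * Real.Gamma (α + 1))) := by
  have hlam0 : (0:ℝ) < lam := by linarith
  have step1 : ∀ c : ℝ, 0 < c →
      ((lam * c) ^ (1 + α) * Real.exp (-c)) *
          (∫ s in ε..1, φw s * s ^ (-lam₀) * Real.exp (c * s ^ lam))
        = ∫ u in Set.Ioi (0:ℝ), Set.indicator (Set.Ioc 0 ((1 - ε) * (lam * c)))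
            (fun u => ((lam * c) ^ α * Real.exp (-c)) *
              (φw (1 - u / (lam * c)) * (1 - u / (lam * c)) ^ (-lam₀)
                * Real.exp (c * (1 - u / (lam * c)) ^ lam))) u := by
    intro c hc
    have hlc : (0:ℝ) < lam * c := mul_pos hlam0 hc
    have hlcne : lam * c ≠ 0 := ne_of_gt hlc
    set f : ℝ → ℝ := fun s => φw s * s ^ (-lam₀) * Real.exp (c * s ^ lam) with hf
    set T : ℝ := (1 - ε) * (lam * c) with hT
    have hT0 : 0 ≤ T := by rw [hT]; nlinarith
    have e1 : (∫ s in ε..1, f s) = ∫ t in (0:ℝ)..(1-ε), f (1 - t) := by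
      rw [intervalIntegral.integral_comp_sub_left f 1]; norm_num
    have e2 : (∫ u in (0:ℝ)..T, f (1 - u / (lam*c)))
        = (lam*c) * ∫ t in (0:ℝ)..(1-ε), f (1-t) := by
      have h := intervalIntegral.integral_comp_div (a := 0) (b := T)
        (fun t => f (1 - t)) hlcne
      rw [h, zero_div, hT, mul_div_assoc, div_self hlcne, mul_one, smul_eq_mul]
    have e3 : (∫ s in ε..1, f s) = (lam*c)⁻¹ * ∫ u in (0:ℝ)..T, f (1 - u / (lam*c)) := by
      rw [e2, e1]; field_simp
    have e4 : (lam * c) ^ (1 + α) = (lam * c) * (lam * c) ^ α := by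
      rw [Real.rpow_add hlc, Real.rpow_one]
    rw [e3, e4]
    have e5 : (lam * c) * (lam * c) ^ α * Real.exp (-c) *
          ((lam*c)⁻¹ * ∫ u in (0:ℝ)..T, f (1 - u / (lam*c)))
        = ((lam * c) ^ α * Real.exp (-c)) * ∫ u in (0:ℝ)..T, f (1 - u / (lam*c)) := by
      field_simp
    rw [e5, ← intervalIntegral.integral_const_mul,
      intervalIntegral.integral_of_le hT0, ← integral_indicator measurableSet_Ioc,
      ← integral_indicator measurableSet_Ioi, Set.indicator_indicator,
      Set.inter_eq_right.mpr Set.Ioc_subset_Ioi_self]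
  have step2 : Tendsto (fun c : ℝ => ∫ u in Set.Ioi (0:ℝ),
      Set.indicator (Set.Ioc 0 ((1 - ε) * (lam * c)))
        (fun u => ((lam * c) ^ α * Real.exp (-c)) *
          (φw (1 - u / (lam * c)) * (1 - u / (lam * c)) ^ (-lam₀)
            * Real.exp (c * (1 - u / (lam * c)) ^ lam))) u)
      atTop (nhds (∫ u in Set.Ioi (0:ℝ), A * u ^ α * Real.exp (-u))) := by
    have hlam0 : (0:ℝ) < lam := by linarith
    set M : ℝ := Real.exp (|lam₀| * |Real.log ε|) with hM
    have hM0 : 0 < M := Real.exp_pos _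
    -- δ from the asymptotic hypothesis
    obtain ⟨δ, hδ0, hδ⟩ : ∃ δ > 0, ∀ t : ℝ, 0 < t → t < δ → |φw (1 - t)| ≤ (|A| + 1) * t ^ α := by
      have h := Metric.tendsto_nhdsWithin_nhds.mp hφw_asymp 1 one_pos
      obtain ⟨δ, hδ0, hδ⟩ := h
      refine ⟨δ, hδ0, fun t ht htδ => ?_⟩
      have h2 := hδ (x := t) ht (by simpa [abs_of_pos ht] using htδ)
      rw [Real.dist_eq, sub_zero] at h2
      have htα : (0:ℝ) < t ^ α := rpow_pos_of_pos ht α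
      rw [abs_div, abs_of_pos htα, div_lt_one htα] at h2
      calc |φw (1 - t)| ≤ |φw (1 - t) - A * t ^ α| + |A * t ^ α| := by
              simpa using abs_add_le (φw (1 - t) - A * t ^ α) (A * t ^ α)
        _ ≤ t ^ α + |A| * t ^ α := by
              rw [abs_mul, abs_of_pos htα]
              exact add_le_add (le_of_lt h2) le_rfl
        _ = (|A| + 1) * t ^ α := by ring
    -- eventual bound on (lam c)^α exp(-(δ/(2 lam)) c)
    have hc₀ : ∀ᶠ c : ℝ in atTop, (lam * c) ^ α * Real.exp (-(δ / (2 * lam) * c)) ≤ 1 := by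
      have hb : (0:ℝ) < δ / (2 * lam) := by positivity
      have h1 : Tendsto (fun c : ℝ => c ^ α * Real.exp (-(δ / (2 * lam) * c))) atTop (𝓝 0) := by
        have := (tendsto_exp_mul_div_rpow_atTop α (δ / (2 * lam)) hb).inv_tendsto_atTop
        refine this.congr' ?_
        filter_upwards [eventually_gt_atTop 0] with x hx
        simp [Pi.inv_apply, div_eq_mul_inv, Real.exp_neg]
      have h2 : Tendsto (fun c : ℝ => lam ^ α * (c ^ α * Real.exp (-(δ / (2 * lam) * c))))
          atTop (𝓝 0) := by simpa using h1.const_mul (lam ^ α)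
      have h3 := h2.eventually (eventually_le_nhds (by norm_num : (0:ℝ) < 1))
      filter_upwards [h3, eventually_gt_atTop 0] with c hc hc0
      calc (lam * c) ^ α * Real.exp (-(δ / (2 * lam) * c))
          = lam ^ α * (c ^ α * Real.exp (-(δ / (2 * lam) * c))) := by
            rw [Real.mul_rpow (le_of_lt hlam0) (le_of_lt hc0)]; ring
        _ ≤ 1 := hc
    -- the dominating function
    set bound : ℝ → ℝ := fun u =>
      M * ((|A| + 1) * (u ^ α * Real.exp (-(1 / lam) * u)) + u ^ (0:ℝ) * Real.exp (-(1 / (2 * lam)) * u))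
      with hbound_def
    have hbound_nonneg : ∀ u : ℝ, 0 < u → 0 ≤ bound u := by
      intro u hu
      have h1 : (0:ℝ) ≤ u ^ α := le_of_lt (rpow_pos_of_pos hu α)
      have h2 : (0:ℝ) ≤ u ^ (0:ℝ) := le_of_lt (rpow_pos_of_pos hu 0)
      positivity
    refine tendsto_integral_filter_of_dominated_convergence bound ?_ ?_ ?_ ?_
    · -- measurability
      filter_upwards [eventually_gt_atTop 0] with c hc
      have hlc : (0:ℝ) < lam * c := by positivity
      have hσ : Continuous (fun u : ℝ => 1 - u / (lam * c)) := by continuity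
      set S := Set.Ioc (0:ℝ) ((1 - ε) * (lam * c)) with hS
      have hmem : ∀ u ∈ S, (1 - u / (lam * c)) ∈ Set.Ico ε 1 := by
        intro u hu
        obtain ⟨hu1, hu2⟩ := hu
        constructor
        · have : u / (lam * c) ≤ 1 - ε := by
            rw [div_le_iff₀ hlc]; linarith
          linarith
        · have : 0 < u / (lam * c) := div_pos hu1 hlc
          linarith
      have hco : ContinuousOn (fun u => ((lam * c) ^ α * Real.exp (-c)) *
          (φw (1 - u / (lam * c)) * (1 - u / (lam * c)) ^ (-lam₀)
            * Real.exp (c * (1 - u / (lam * c)) ^ lam))) S := by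
        refine continuousOn_const.mul (ContinuousOn.mul (ContinuousOn.mul ?_ ?_) ?_)
        · refine hφw_cont.comp hσ.continuousOn ?_
          intro u hu
          have := hmem u hu
          exact ⟨by linarith [this.1], le_of_lt this.2⟩
        · refine ContinuousOn.rpow_const hσ.continuousOn ?_
          intro u hu
          exact Or.inl (ne_of_gt (lt_of_lt_of_le hε0 (hmem u hu).1))
        · refine Real.continuous_exp.comp_continuousOn ?_
          refine continuousOn_const.mul ?_
          refine ContinuousOn.rpow_const hσ.continuousOn ?_
          intro u hu
          exact Or.inl (ne_of_gt (lt_of_lt_of_le hε0 (hmem u hu).1))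
      have h1 : AEStronglyMeasurable (fun u => ((lam * c) ^ α * Real.exp (-c)) *
          (φw (1 - u / (lam * c)) * (1 - u / (lam * c)) ^ (-lam₀)
            * Real.exp (c * (1 - u / (lam * c)) ^ lam))) (volume.restrict S) :=
        hco.aestronglyMeasurable measurableSet_Ioc
      have h2 : AEStronglyMeasurable (Set.indicator S (fun u => ((lam * c) ^ α * Real.exp (-c)) *
          (φw (1 - u / (lam * c)) * (1 - u / (lam * c)) ^ (-lam₀)
            * Real.exp (c * (1 - u / (lam * c)) ^ lam)))) (volume : Measure ℝ) :=
        (aestronglyMeasurable_indicator_iff measurableSet_Ioc).mpr h1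
      exact h2.restrict
    · -- bound
      filter_upwards [hc₀, eventually_ge_atTop 1] with c hcbd hc1
      have hc : (0:ℝ) < c := lt_of_lt_of_le one_pos hc1
      have hlc : (0:ℝ) < lam * c := by positivity
      rw [ae_restrict_iff' measurableSet_Ioi]
      refine ae_of_all _ fun u hu => ?_
      have hu0 : (0:ℝ) < u := hu
      by_cases hmem : u ∈ Set.Ioc (0:ℝ) ((1 - ε) * (lam * c))
      · rw [Set.indicator_of_mem hmem]
        set t : ℝ := u / (lam * c) with ht
        have ht0 : 0 < t := div_pos hu0 hlc
        have ht1 : t ≤ 1 - ε := by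
          rw [ht, div_le_iff₀ hlc]; exact le_trans hmem.2 (by ring_nf; rfl)
        set s : ℝ := 1 - t with hs
        have hsε : ε ≤ s := by rw [hs]; linarith
        have hs1 : s < 1 := by rw [hs]; linarith
        have hs0 : 0 < s := lt_of_lt_of_le hε0 hsε
        -- bound for rpow factor
        have brp : s ^ (-lam₀) ≤ M := by
          rw [Real.rpow_def_of_pos hs0, hM]
          refine Real.exp_le_exp.mpr ?_
          calc Real.log s * -lam₀ ≤ |Real.log s * -lam₀| := le_abs_self _
            _ = |lam₀| * |Real.log s| := by rw [abs_mul, abs_neg]; ring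
            _ ≤ |lam₀| * |Real.log ε| := by
                refine mul_le_mul_of_nonneg_left ?_ (abs_nonneg _)
                have hls : Real.log s ≤ 0 := Real.log_nonpos (le_of_lt hs0) (le_of_lt hs1)
                have hlε : Real.log ε ≤ 0 := Real.log_nonpos (le_of_lt hε0) (le_of_lt hε1)
                rw [abs_of_nonpos hls, abs_of_nonpos hlε, neg_le_neg_iff]
                exact Real.log_le_log hε0 hsε
        -- bound for the exponential factor
        have bexp : Real.exp (-c) * Real.exp (c * s ^ lam) ≤ Real.exp (-(1/lam) * u) := by
          rw [← Real.exp_add]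
          refine Real.exp_le_exp.mpr ?_
          have h1 : s ^ lam ≤ s := by
            have := Real.rpow_le_rpow_of_exponent_ge hs0 (le_of_lt hs1) (le_of_lt hlam)
            simpa using this
          have h2 : c * s ^ lam ≤ c * s := mul_le_mul_of_nonneg_left h1 (le_of_lt hc)
          have h3 : c * t = (1/lam) * u := by
            rw [ht]; field_simp
          calc -c + c * s ^ lam ≤ -c + c * s := by linarith
            _ = -(c * t) := by rw [hs]; ring
            _ = -(1/lam) * u := by rw [h3]; ring
        have habs : |((lam * c) ^ α * Real.exp (-c)) *
            (φw s * s ^ (-lam₀) * Real.exp (c * s ^ lam))|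
            = (lam * c) ^ α * Real.exp (-c) * |φw s| * s ^ (-lam₀) * Real.exp (c * s ^ lam) := by
          rw [abs_mul, abs_mul, abs_mul, abs_mul,
            abs_of_pos (rpow_pos_of_pos hlc α), abs_of_pos (Real.exp_pos _),
            abs_of_pos (rpow_pos_of_pos hs0 (-lam₀)), abs_of_pos (Real.exp_pos _)]
          ring
        rw [Real.norm_eq_abs, habs]
        by_cases hcase : t < δ
        · -- |φw s| ≤ (|A|+1) t^α
          have hφ : |φw s| ≤ (|A| + 1) * t ^ α := hδ t ht0 hcase
          have hut : (lam * c) ^ α * t ^ α = u ^ α := by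
            rw [← Real.mul_rpow (le_of_lt hlc) (le_of_lt ht0)]
            congr 1
            rw [ht]; field_simp
          calc (lam * c) ^ α * Real.exp (-c) * |φw s| * s ^ (-lam₀) * Real.exp (c * s ^ lam)
              ≤ (lam * c) ^ α * Real.exp (-c) * ((|A| + 1) * t ^ α) * M * Real.exp (c * s ^ lam) := by
                have e1 : (0:ℝ) ≤ (lam * c) ^ α := le_of_lt (rpow_pos_of_pos hlc α)
                have e3 : (0:ℝ) ≤ s ^ (-lam₀) := le_of_lt (rpow_pos_of_pos hs0 _)
                gcongr
            _ = M * ((|A| + 1) * ((lam * c) ^ α * t ^ α)) * (Real.exp (-c) * Real.exp (c * s ^ lam)) := by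
                ring
            _ ≤ M * ((|A| + 1) * u ^ α) * Real.exp (-(1/lam) * u) := by
                rw [hut]
                refine mul_le_mul_of_nonneg_left bexp ?_
                have := rpow_pos_of_pos hu0 α; positivity
            _ ≤ bound u := by
                have heq : M * ((|A| + 1) * u ^ α) * Real.exp (-(1/lam) * u)
                    = M * ((|A| + 1) * (u ^ α * Real.exp (-(1 / lam) * u))) := by ring
                rw [heq, hbound_def]
                have h2 : (0:ℝ) ≤ u ^ (0:ℝ) * Real.exp (-(1 / (2 * lam)) * u) := by
                  have := rpow_pos_of_pos hu0 (0:ℝ); positivity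
                refine mul_le_mul_of_nonneg_left ?_ (le_of_lt hM0)
                exact le_add_of_nonneg_right h2
        · -- t ≥ δ : use |φw| ≤ 1 and the decay of (lam c)^α e^{-u/(2 lam)}
          push_neg at hcase
          have hφ : |φw s| ≤ 1 := hφw_bd s ⟨by linarith, le_of_lt hs1⟩
          have huδ : δ * c ≤ u := by
            have h1 : δ * (lam * c) ≤ t * (lam * c) := mul_le_mul_of_nonneg_right hcase (le_of_lt hlc)
            have h2 : t * (lam * c) = u := by rw [ht]; field_simp
            have hl1 : (0:ℝ) ≤ lam - 1 := by linarith
            have h3 : δ * c ≤ δ * (lam * c) := by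
              nlinarith [mul_nonneg (mul_nonneg (le_of_lt hδ0) (le_of_lt hc)) hl1]
            linarith
          have hkey : (lam * c) ^ α * Real.exp (-(1/lam) * u) ≤ u ^ (0:ℝ) * Real.exp (-(1/(2*lam)) * u) := by
            have e1 : Real.exp (-(1/lam) * u) = Real.exp (-(1/(2*lam)) * u) * Real.exp (-(1/(2*lam)) * u) := by
              rw [← Real.exp_add]; congr 1; field_simp; ring
            have e2 : Real.exp (-(1/(2*lam)) * u) ≤ Real.exp (-(δ / (2 * lam) * c)) := by
              refine Real.exp_le_exp.mpr ?_
              have h2l : (0:ℝ) < 2 * lam := by linarith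
              have h := (div_le_div_iff_of_pos_right h2l).mpr huδ
              rw [neg_mul, neg_le_neg_iff]
              calc δ / (2*lam) * c = δ * c / (2*lam) := by ring
                _ ≤ u / (2*lam) := h
                _ = 1/(2*lam) * u := by ring
            calc (lam * c) ^ α * Real.exp (-(1/lam) * u)
                = ((lam * c) ^ α * Real.exp (-(1/(2*lam)) * u)) * Real.exp (-(1/(2*lam)) * u) := by
                  rw [e1]; ring
              _ ≤ ((lam * c) ^ α * Real.exp (-(δ / (2 * lam) * c))) * Real.exp (-(1/(2*lam)) * u) := by
                  refine mul_le_mul_of_nonneg_right ?_ (le_of_lt (Real.exp_pos _))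
                  exact mul_le_mul_of_nonneg_left e2 (le_of_lt (rpow_pos_of_pos hlc α))
              _ ≤ 1 * Real.exp (-(1/(2*lam)) * u) := by
                  refine mul_le_mul_of_nonneg_right hcbd (le_of_lt (Real.exp_pos _))
              _ = u ^ (0:ℝ) * Real.exp (-(1/(2*lam)) * u) := by
                  rw [Real.rpow_zero, one_mul]
          calc (lam * c) ^ α * Real.exp (-c) * |φw s| * s ^ (-lam₀) * Real.exp (c * s ^ lam)
              ≤ (lam * c) ^ α * Real.exp (-c) * 1 * M * Real.exp (c * s ^ lam) := by
                have e1 : (0:ℝ) ≤ (lam * c) ^ α := le_of_lt (rpow_pos_of_pos hlc α)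
                have e3 : (0:ℝ) ≤ s ^ (-lam₀) := le_of_lt (rpow_pos_of_pos hs0 _)
                gcongr
            _ = M * ((lam * c) ^ α * (Real.exp (-c) * Real.exp (c * s ^ lam))) := by ring
            _ ≤ M * ((lam * c) ^ α * Real.exp (-(1/lam) * u)) := by
                refine mul_le_mul_of_nonneg_left ?_ (le_of_lt hM0)
                exact mul_le_mul_of_nonneg_left bexp (le_of_lt (rpow_pos_of_pos hlc α))
            _ ≤ M * (u ^ (0:ℝ) * Real.exp (-(1/(2*lam)) * u)) := by
                exact mul_le_mul_of_nonneg_left hkey (le_of_lt hM0)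
            _ ≤ bound u := by
                rw [hbound_def]
                have h1 : (0:ℝ) ≤ (|A| + 1) * (u ^ α * Real.exp (-(1 / lam) * u)) := by
                  have := rpow_pos_of_pos hu0 α; positivity
                refine mul_le_mul_of_nonneg_left ?_ (le_of_lt hM0)
                exact le_add_of_nonneg_left h1
      · rw [Set.indicator_of_notMem hmem]
        simpa using hbound_nonneg u hu0
    · -- integrability of the bound
      have hb1 : (0:ℝ) < 1 / lam := by positivity
      have hb2 : (0:ℝ) < 1 / (2 * lam) := by positivity
      have i1 : IntegrableOn (fun u : ℝ => u ^ α * Real.exp (-(1 / lam) * u)) (Set.Ioi 0) := by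
        have := integrableOn_rpow_mul_exp_neg_mul_rpow (by linarith : (-1:ℝ) < α) zero_lt_one hb1
        refine this.congr_fun (fun u hu => ?_) measurableSet_Ioi
        simp only [Real.rpow_one]
      have i2 : IntegrableOn (fun u : ℝ => u ^ (0:ℝ) * Real.exp (-(1 / (2 * lam)) * u)) (Set.Ioi 0) := by
        have := integrableOn_rpow_mul_exp_neg_mul_rpow (by norm_num : (-1:ℝ) < 0) zero_lt_one hb2
        refine this.congr_fun (fun u hu => ?_) measurableSet_Ioi
        simp only [Real.rpow_one]
      exact (((i1.const_mul (|A| + 1)).add i2).const_mul M)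
    · -- a.e. pointwise limit
      rw [ae_restrict_iff' measurableSet_Ioi]
      refine ae_of_all _ fun u hu => ?_
      have hu0 : (0:ℝ) < u := hu
      -- eventually the indicator is "on"
      have hev : ∀ᶠ c : ℝ in atTop,
          Set.indicator (Set.Ioc 0 ((1 - ε) * (lam * c)))
            (fun u => ((lam * c) ^ α * Real.exp (-c)) *
              (φw (1 - u / (lam * c)) * (1 - u / (lam * c)) ^ (-lam₀)
                * Real.exp (c * (1 - u / (lam * c)) ^ lam))) u
          = ((lam * c) ^ α * φw (1 - u / (lam * c))) * ((1 - u / (lam * c)) ^ (-lam₀))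
              * Real.exp (c * (1 - u / (lam * c)) ^ lam - c) := by
        have hpos : (0:ℝ) < (1 - ε) * lam := by nlinarith
        filter_upwards [eventually_gt_atTop 0, eventually_ge_atTop (u / ((1 - ε) * lam))]
          with c hc hcu
        have hmem2 : u ∈ Set.Ioc (0:ℝ) ((1 - ε) * (lam * c)) := by
          refine ⟨hu0, ?_⟩
          rw [div_le_iff₀ hpos] at hcu
          nlinarith
        rw [Set.indicator_of_mem hmem2, Real.exp_neg, Real.exp_sub]
        ring
      -- the three factors
      have hP : Tendsto (fun c : ℝ => (lam * c) ^ α * φw (1 - u / (lam * c))) atTop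
          (𝓝 (A * u ^ α)) := by
        have hquot : Tendsto (fun t : ℝ => φw (1 - t) / t ^ α) (𝓝[>] (0:ℝ)) (𝓝 A) := by
          have h := hφw_asymp.add (tendsto_const_nhds (x := A))
          rw [zero_add] at h
          refine h.congr' ?_
          filter_upwards [self_mem_nhdsWithin] with t ht
          have htα : (0:ℝ) < t ^ α := rpow_pos_of_pos ht α
          field_simp
          ring
        have htc : Tendsto (fun c : ℝ => u / (lam * c)) atTop (𝓝[>] (0:ℝ)) := by
          rw [tendsto_nhdsWithin_iff]
          constructor
          · exact Tendsto.div_atTop tendsto_const_nhds (tendsto_id.const_mul_atTop hlam0)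
          · filter_upwards [eventually_gt_atTop 0] with c hc
            have : (0:ℝ) < lam * c := by positivity
            exact div_pos hu0 this
        have hcomp := (hquot.comp htc).const_mul (u ^ α)
        refine (hcomp.congr' ?_).mono_right ?_
        · filter_upwards [eventually_gt_atTop 0] with c hc
          have hlc : (0:ℝ) < lam * c := by positivity
          have hrp : (u / (lam * c)) ^ α = u ^ α / (lam * c) ^ α :=
            Real.div_rpow (le_of_lt hu0) (le_of_lt hlc) α
          have huα : (0:ℝ) < u ^ α := rpow_pos_of_pos hu0 α
          have hlcα : (0:ℝ) < (lam * c) ^ α := rpow_pos_of_pos hlc α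
          simp only [Function.comp, hrp]
          field_simp
        · rw [mul_comm]
      have hQ : Tendsto (fun c : ℝ => (1 - u / (lam * c)) ^ (-lam₀)) atTop (𝓝 1) := by
        have hbase : Tendsto (fun c : ℝ => 1 - u / (lam * c)) atTop (𝓝 1) := by
          have h1 := Tendsto.div_atTop (tendsto_const_nhds (x := u))
            (tendsto_id.const_mul_atTop hlam0)
          have h2 := (tendsto_const_nhds (x := (1:ℝ))).sub h1
          simpa using h2
        have hcont : ContinuousAt (fun x : ℝ => x ^ (-lam₀)) 1 :=
          Real.continuousAt_rpow_const 1 _ (Or.inl one_ne_zero)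
        have := hcont.tendsto.comp hbase
        simpa [Function.comp_def, Real.one_rpow] using this
      have hR : Tendsto (fun c : ℝ => Real.exp (c * (1 - u / (lam * c)) ^ lam - c)) atTop
          (𝓝 (Real.exp (-u))) := by
        have harg : Tendsto (fun c : ℝ => c * (1 - u / (lam * c)) ^ lam - c) atTop (𝓝 (-u)) := by
          have hf : HasDerivAt (fun x : ℝ => 1 - u * x) (-u) 0 := by
            simpa using ((hasDerivAt_id (0:ℝ)).const_mul u).const_sub 1
          have hψ : HasDerivAt (fun x : ℝ => (1 - u * x) ^ lam) (-(u * lam)) 0 := by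
            have h := hf.rpow_const (p := lam) (by norm_num)
            simpa using h
          have hslope := hasDerivAt_iff_tendsto_slope.mp hψ
          have hxc : Tendsto (fun c : ℝ => (lam * c)⁻¹) atTop (𝓝[≠] (0:ℝ)) := by
            rw [tendsto_nhdsWithin_iff]
            constructor
            · exact Tendsto.inv_tendsto_atTop (tendsto_id.const_mul_atTop hlam0)
            · filter_upwards [eventually_gt_atTop 0] with c hc
              simp [ne_of_gt hc, ne_of_gt hlam0]
          have hcomp := hslope.comp hxc
          have h2 := hcomp.const_mul (lam⁻¹)
          simp only [Function.comp] at h2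
          refine (h2.congr' ?_).mono_right (by field_simp; exact le_rfl)
          filter_upwards [eventually_gt_atTop 0] with c hc
          have hlc : (0:ℝ) < lam * c := by positivity
          rw [slope_def_field]
          field_simp
          simp only [mul_zero, sub_zero, Real.one_rpow, one_mul]
        exact (Real.continuous_exp.tendsto _).comp harg
      have hprod := (hP.mul hQ).mul hR
      rw [mul_one] at hprod
      exact Tendsto.congr' (EventuallyEq.symm hev) hprod
  have step3 : (∫ u in Set.Ioi (0:ℝ), A * u ^ α * Real.exp (-u)) = A * Real.Gamma (α + 1) := by
    have h1 : (∫ u in Set.Ioi (0:ℝ), A * u ^ α * Real.exp (-u))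
        = A * ∫ u in Set.Ioi (0:ℝ), Real.exp (-u) * u ^ ((α+1)-1) := by
      rw [← integral_const_mul]
      refine setIntegral_congr_fun measurableSet_Ioi fun u hu => ?_
      rw [add_sub_cancel_right]; ring
    rw [h1, Real.Gamma_eq_integral (by linarith : (0:ℝ) < α + 1)]
  rw [← step3]
  refine step2.congr' ?_
  filter_upwards [eventually_gt_atTop 0] with c hc
  exact (step1 c hc).symm

/-- Laplace-type asymptotics: if `φ_w` is continuous on `[-1,1]` with `|φ_w| ≤ 1` and
`φ_w(1-t) = A tᵅ + o(tᵅ)` as `t ↓ 0` (`A ≠ 0`, `α ≥ 0`), then for any fixed `0 < ε < 1`,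
as `h ↓ 0`,
`∫_ε^1 φ_w(s) s^{-λ₀} exp(s^λ/(μ h^λ)) ds ∼ A Γ(α+1) ((μ/λ) h^λ)^{1+α} e^{1/(μ h^λ)}`. -/
theorem statement8
    (φw : ℝ → ℝ) (hφw_cont : ContinuousOn φw (Set.Icc (-1) 1))
    (hφw_bd : ∀ t ∈ Set.Icc (-1:ℝ) 1, |φw t| ≤ 1)
    (A α : ℝ) (hA : A ≠ 0) (hα : 0 ≤ α)
    (hφw_asymp : Tendsto (fun t : ℝ => (φw (1 - t) - A * t ^ α) / t ^ α)
      (nhdsWithin 0 (Set.Ioi 0)) (nhds 0))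
    (lam μ lam₀ : ℝ) (hlam : 1 < lam) (hμ : 0 < μ)
    (ε : ℝ) (hε0 : 0 < ε) (hε1 : ε < 1) :
    Tendsto (fun h : ℝ =>
        (∫ s in ε..1, φw s * s ^ (-lam₀) * Real.exp (s ^ lam / (μ * h ^ lam)))
          / (A * Real.Gamma (α + 1) * ((μ / lam) * h ^ lam) ^ (1 + α)
              * Real.exp (1 / (μ * h ^ lam))))
      (nhdsWithin 0 (Set.Ioi 0)) (nhds 1) := by
  have key := laplace_key φw hφw_cont hφw_bd A α hα hφw_asymp lam lam₀ hlam ε hε0 hε1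
  have hlam0 : (0:ℝ) < lam := by linarith
  have hAΓ : A * Real.Gamma (α + 1) ≠ 0 :=
    mul_ne_zero hA (ne_of_gt (Real.Gamma_pos_of_pos (by linarith)))
  set c : ℝ → ℝ := fun h => (μ * h ^ lam)⁻¹ with hc_def
  have hc_top : Tendsto c (nhdsWithin 0 (Set.Ioi 0)) atTop := by
    have h1 : Tendsto (fun h : ℝ => μ * h ^ lam) (nhdsWithin 0 (Set.Ioi 0))
        (nhdsWithin 0 (Set.Ioi 0)) := by
      rw [tendsto_nhdsWithin_iff]
      constructor
      · have hcont : ContinuousAt (fun x : ℝ => x ^ lam) 0 :=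
          Real.continuousAt_rpow_const 0 lam (Or.inr (le_of_lt hlam0))
        have h2 : Tendsto (fun h : ℝ => h ^ lam) (nhdsWithin 0 (Set.Ioi 0)) (nhds 0) := by
          have h4 := hcont.tendsto.mono_left (nhdsWithin_le_nhds (s := Set.Ioi (0:ℝ)))
          rwa [Real.zero_rpow (ne_of_gt hlam0)] at h4
        have h3 := h2.const_mul μ
        simpa using h3
      · filter_upwards [self_mem_nhdsWithin] with h hh
        exact mul_pos hμ (Real.rpow_pos_of_pos hh lam)
    exact tendsto_inv_nhdsGT_zero.comp h1
  have hcomp := key.comp hc_top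
  have hdiv := hcomp.div_const (A * Real.Gamma (α + 1))
  rw [div_self hAΓ] at hdiv
  refine hdiv.congr' ?_
  filter_upwards [self_mem_nhdsWithin] with h hh
  have hh0 : (0:ℝ) < h := hh
  have hP : (0:ℝ) < μ * h ^ lam := mul_pos hμ (Real.rpow_pos_of_pos hh0 lam)
  have hch : c h = (μ * h ^ lam)⁻¹ := rfl
  have hlc : (0:ℝ) < lam * c h := by rw [hch]; positivity
  have hint : (∫ s in ε..1, φw s * s ^ (-lam₀) * Real.exp (c h * s ^ lam))
      = ∫ s in ε..1, φw s * s ^ (-lam₀) * Real.exp (s ^ lam / (μ * h ^ lam)) := by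
    congr 1
    funext s
    rw [hch, div_eq_mul_inv, mul_comm (s ^ lam)]
  have hden : ((μ / lam) * h ^ lam) ^ (1 + α) = ((lam * c h) ^ (1 + α))⁻¹ := by
    have e1 : (μ / lam) * h ^ lam = (lam * c h)⁻¹ := by
      rw [hch]; field_simp
    rw [e1, Real.inv_rpow (le_of_lt hlc)]
  have hexp : Real.exp (1 / (μ * h ^ lam)) = Real.exp (c h) := by
    rw [hch, one_div]
  show ((lam * c h) ^ (1 + α) * Real.exp (-(c h)) *
      ∫ s in ε..1, φw s * s ^ (-lam₀) * Real.exp (c h * s ^ lam)) / (A * Real.Gamma (α + 1))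
    = _
  rw [hint, hden, hexp, Real.exp_neg]
  have hX : (0:ℝ) < (lam * c h) ^ (1 + α) := Real.rpow_pos_of_pos hlc _
  field_simp
end

section
/- Let $Y$ be a real random variable with a density, $h_n \to 0$ a positive sequence, and $x$ a fixed real number. Then $(Y-x)/h_n \bmod 2\pi$ converges in distribution to the uniform distribution on $[0,2\pi]$ as $n \to \infty$. -/
set_option autoImplicit false
open MeasureTheory ProbabilityTheory Real Filter Topology BoundedContinuousFunction

/-- `mod2pi w` is the representative in `[0, 2π)` of the residue of `w` modulo `2π`. -/
noncomputable def mod2pi (w : ℝ) : ℝ := (2 * π) * Int.fract (w / (2 * π))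

/-- The uniform distribution on `[0, 2π]`. -/
noncomputable def uniformTwoPi : Measure ℝ :=
  (ENNReal.ofReal (2 * π))⁻¹ • (volume.restrict (Set.Icc 0 (2 * π)))

section Aux

lemma mod2pi_eq_self {w : ℝ} (h0 : 0 ≤ w) (h1 : w < 2 * π) : mod2pi w = w := by
  unfold mod2pi
  rw [Int.fract_eq_self.mpr
    ⟨div_nonneg h0 Real.two_pi_pos.le, (div_lt_one Real.two_pi_pos).mpr h1⟩]
  rw [mul_comm, div_mul_cancel₀ _ Real.two_pi_pos.ne']

lemma periodic_mod2pi : Function.Periodic mod2pi (2 * π) := by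
  intro w
  unfold mod2pi
  have h : (w + 2 * π) / (2 * π) = w / (2 * π) + 1 := by
    field_simp
  rw [h, Int.fract_add_one]

lemma measurable_mod2pi : Measurable mod2pi :=
  ((measurable_id.div_const (2 * π)).fract).const_mul (2 * π)

lemma intervalIntegrable_of_bound {f : ℝ → ℝ} {C : ℝ} (hm : Measurable f)
    (hC : ∀ y, |f y| ≤ C) (u v : ℝ) : IntervalIntegrable f volume u v := by
  rw [intervalIntegrable_iff]
  exact ((integrableOn_const_iff (C := C)).mpr (Or.inr measure_Ioc_lt_top)).mono'
    hm.aestronglyMeasurable.restrict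
    (Filter.Eventually.of_forall fun y => by rw [Real.norm_eq_abs]; exact hC y)

lemma tendsto_of_forall_eventually_abs_le {J : ℕ → ℝ} {L : ℝ} {K : ℝ}
    (h : ∀ ε > 0, ∀ᶠ n in atTop, |J n - L| ≤ K * ε) :
    Tendsto J atTop (nhds L) := by
  rw [Metric.tendsto_atTop]
  intro ε hε
  have hK1 : (0 : ℝ) < |K| + 1 := by positivity
  obtain ⟨N, hN⟩ := (eventually_atTop.mp (h (ε / (|K| + 1)) (by positivity)))
  refine ⟨N, fun n hn' => ?_⟩
  rw [Real.dist_eq]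
  calc |J n - L| ≤ K * (ε / (|K| + 1)) := hN n hn'
    _ ≤ |K| * (ε / (|K| + 1)) :=
        mul_le_mul_of_nonneg_right (le_abs_self K) (by positivity)
    _ < (|K| + 1) * (ε / (|K| + 1)) := by
        apply mul_lt_mul_of_pos_right (by linarith) (by positivity)
    _ = ε := by field_simp

end Aux

section Equidistribution

variable {G : ℝ → ℝ} {C : ℝ} {hn : ℕ → ℝ}

/-- Key lemma: the integral of `G (y / hₙ)` over an interval converges to the mean of the
periodic function `G` times the length of the interval. -/
lemma tendsto_intervalIntegral_comp_div
    (hGm : Measurable G) (hC : ∀ y, |G y| ≤ C) (hper : Function.Periodic G (2 * π))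
    (hpos : ∀ n, 0 < hn n) (h0 : Tendsto hn atTop (nhds 0)) (a b : ℝ) :
    Tendsto (fun n => ∫ y in a..b, G (y / hn n)) atTop
      (nhds ((b - a) * ((∫ y in (0:ℝ)..(2 * π), G y) / (2 * π)))) := by
  have hC0 : 0 ≤ C := le_trans (abs_nonneg _) (hC 0)
  set m : ℝ := (∫ y in (0:ℝ)..(2 * π), G y) / (2 * π) with hm
  have hint : ∀ u v : ℝ, IntervalIntegrable G volume u v := intervalIntegrable_of_bound hGm hC
  set H : ℝ → ℝ := fun t => ∫ y in (0:ℝ)..t, G y with hH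
  have hHsub : ∀ u v : ℝ, H v - H u = ∫ y in u..v, G y := fun u v =>
    intervalIntegral.integral_interval_sub_left (hint 0 v) (hint 0 u)
  have hHper : Function.Periodic (fun t => H t - m * t) (2 * π) := by
    intro t
    have h1 : H (t + 2 * π) - H t = ∫ y in t..(t + 2 * π), G y := hHsub t (t + 2 * π)
    have h2 : (∫ y in t..(t + 2 * π), G y) = ∫ y in (0:ℝ)..(0 + 2 * π), G y :=
      hper.intervalIntegral_add_eq t 0
    have h3 : m * (2 * π) = ∫ y in (0:ℝ)..(2 * π), G y := by
      rw [hm]; field_simp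
    have key : H (t + 2 * π) - H t = m * (2 * π) := by
      rw [h1, h2, zero_add, h3]
    show H (t + 2 * π) - m * (t + 2 * π) = H t - m * t
    linear_combination key
  have hK : ∀ t, |H t - m * t| ≤ 2 * π * C + 2 * π * |m| := by
    intro t
    obtain ⟨y, hy, hEq⟩ := hHper.exists_mem_Ico₀ Real.two_pi_pos t
    have hEq' : H t - m * t = H y - m * y := hEq
    rw [hEq']
    have h1 : |H y| ≤ C * |y - 0| := by
      have := intervalIntegral.norm_integral_le_of_norm_le_const (a := (0:ℝ)) (b := y) (C := C)
        (f := G) (fun z _ => by rw [Real.norm_eq_abs]; exact hC z)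
      simpa [Real.norm_eq_abs] using this
    have hy0 : 0 ≤ y := hy.1
    have hy2 : y ≤ 2 * π := hy.2.le
    have habs : |y - 0| = y := by rw [sub_zero, abs_of_nonneg hy0]
    rw [habs] at h1
    have h2 : |m| * |y| ≤ |m| * (2 * π) := by
      exact mul_le_mul_of_nonneg_left (by rw [abs_of_nonneg hy0]; exact hy2) (abs_nonneg m)
    have h3 : |H y - m * y| ≤ |H y| + |m| * |y| := by
      have := norm_sub_le (H y) (m * y)
      simpa [Real.norm_eq_abs, abs_mul] using this
    nlinarith [mul_le_mul_of_nonneg_right hy2 hC0]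
  set K : ℝ := 2 * π * C + 2 * π * |m| with hKdef
  have key : ∀ n, |(∫ y in a..b, G (y / hn n)) - (b - a) * m| ≤ hn n * (2 * K) := by
    intro n
    have hne : hn n ≠ 0 := (hpos n).ne'
    have e0 : (∫ y in a..b, G (y / hn n)) = hn n * (H (b / hn n) - H (a / hn n)) := by
      rw [intervalIntegral.integral_comp_div (a := a) (b := b) G hne, ← hHsub, smul_eq_mul]
    rw [e0]
    have e1 : hn n * (H (b / hn n) - H (a / hn n)) - (b - a) * m
        = hn n * ((H (b / hn n) - m * (b / hn n)) - (H (a / hn n) - m * (a / hn n))) := by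
      field_simp
      ring
    rw [e1, abs_mul, abs_of_pos (hpos n)]
    have h2 : |(H (b / hn n) - m * (b / hn n)) - (H (a / hn n) - m * (a / hn n))| ≤ 2 * K := by
      have h3 := norm_sub_le (H (b / hn n) - m * (b / hn n)) (H (a / hn n) - m * (a / hn n))
      simp only [Real.norm_eq_abs] at h3
      have := hK (b / hn n)
      have := hK (a / hn n)
      rw [hKdef]
      linarith
    exact mul_le_mul_of_nonneg_left h2 (hpos n).le
  have habs : Tendsto (fun n => |(∫ y in a..b, G (y / hn n)) - (b - a) * m|) atTop (nhds 0) := by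
    have hb : Tendsto (fun n => hn n * (2 * K)) atTop (nhds 0) := by
      simpa using h0.mul_const (2 * K)
    exact squeeze_zero (fun n => abs_nonneg _) key hb
  refine tendsto_iff_dist_tendsto_zero.mpr ?_
  simpa [Real.dist_eq] using habs

lemma tendsto_intervalIntegral_comp_div_sub
    (hGm : Measurable G) (hC : ∀ y, |G y| ≤ C) (hper : Function.Periodic G (2 * π))
    (hpos : ∀ n, 0 < hn n) (h0 : Tendsto hn atTop (nhds 0)) (x a b : ℝ) :
    Tendsto (fun n => ∫ y in a..b, G ((y - x) / hn n)) atTop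
      (nhds ((b - a) * ((∫ y in (0:ℝ)..(2 * π), G y) / (2 * π)))) := by
  have h := tendsto_intervalIntegral_comp_div hGm hC hper hpos h0 (a - x) (b - x)
  rw [show (b - x) - (a - x) = b - a by ring] at h
  refine h.congr fun n => ?_
  exact (intervalIntegral.integral_comp_sub_right (fun y => G (y / hn n)) x).symm

/-- Equidistribution against a continuous compactly supported test density. -/
lemma tendsto_integral_comp_div_mul_cont
    (hGm : Measurable G) (hC : ∀ y, |G y| ≤ C) (hper : Function.Periodic G (2 * π))
    (hpos : ∀ n, 0 < hn n) (h0 : Tendsto hn atTop (nhds 0)) (x : ℝ)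
    {φ : ℝ → ℝ} (hφc : Continuous φ) (hφs : HasCompactSupport φ) :
    Tendsto (fun n => ∫ y, G ((y - x) / hn n) * φ y) atTop
      (nhds ((∫ y, φ y) * ((∫ y in (0:ℝ)..(2 * π), G y) / (2 * π)))) := by
  have hC0 : 0 ≤ C := le_trans (abs_nonneg _) (hC 0)
  set m : ℝ := (∫ y in (0:ℝ)..(2 * π), G y) / (2 * π) with hm
  have hGnm : ∀ n, Measurable fun y => G ((y - x) / hn n) := fun n =>
    hGm.comp ((measurable_id.sub_const x).div_const _)
  obtain ⟨Mφ, hMφ⟩ : ∃ M, ∀ y, |φ y| ≤ M := by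
    obtain ⟨M, hM⟩ := hφs.exists_bound_of_continuous hφc
    exact ⟨M, fun y => by have := hM y; rwa [Real.norm_eq_abs] at this⟩
  have hMφ0 : 0 ≤ Mφ := le_trans (abs_nonneg _) (hMφ 0)
  -- a compact interval containing the support
  obtain ⟨R, hR⟩ := hφs.isBounded.subset_closedBall 0
  set A : ℝ := -(|R| + 1) with hA
  set B : ℝ := |R| + 1 with hB
  have hAB : A < B := by
    have : (0:ℝ) ≤ |R| := abs_nonneg R
    rw [hA, hB]; linarith
  have hBA : 0 < B - A := by linarith
  have hsupp : ∀ y, y ∉ Set.Ioc A B → φ y = 0 := by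
    intro y hy
    by_contra hphi
    have : y ∈ tsupport φ := subset_tsupport φ hphi
    have h1 : y ∈ Metric.closedBall (0:ℝ) R := hR this
    rw [Real.closedBall_eq_Icc] at h1
    apply hy
    constructor
    · have : -R ≤ y := by simpa using h1.1
      have : -|R| ≤ y := le_trans (by simp [neg_abs_le, neg_le_neg_iff]; exact le_abs_self R) this
      rw [hA]; linarith
    · have : y ≤ R := by simpa using h1.2
      have : y ≤ |R| := le_trans this (le_abs_self R)
      rw [hB]; linarith
  -- reduction of full-line integrals to the interval [A, B]
  have hred : ∀ ψ : ℝ → ℝ, (∀ y, y ∉ Set.Ioc A B → ψ y = 0) →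
      (∫ y, ψ y) = ∫ y in A..B, ψ y := by
    intro ψ hψ
    rw [intervalIntegral.integral_of_le hAB.le,
      setIntegral_eq_integral_of_forall_compl_eq_zero (fun y hy => hψ y hy)]
  -- integrability
  have hprod_int : ∀ n, ∀ u v : ℝ,
      IntervalIntegrable (fun y => G ((y - x) / hn n) * φ y) volume u v := by
    intro n u v
    apply intervalIntegrable_of_bound ((hGnm n).mul hφc.measurable) (C := C * Mφ)
    intro y
    show |G ((y - x) / hn n) * φ y| ≤ C * Mφ
    rw [abs_mul]
    exact mul_le_mul (hC _) (hMφ y) (abs_nonneg _) hC0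
  have hGn_int : ∀ n, ∀ u v : ℝ,
      IntervalIntegrable (fun y => G ((y - x) / hn n)) volume u v := fun n =>
    intervalIntegrable_of_bound (hGnm n) (fun y => hC _)
  -- main epsilon argument
  apply tendsto_of_forall_eventually_abs_le (K := (C + |m|) * (B - A) + 1)
  intro ε hε
  -- uniform continuity of φ
  have hUC : UniformContinuous φ :=
    hφc.uniformContinuous_of_tendsto_cocompact hφs.is_zero_at_infty
  rw [Metric.uniformContinuous_iff] at hUC
  obtain ⟨δ, hδ, hδφ⟩ := hUC ε hε
  -- partition
  obtain ⟨N, hNgt⟩ := exists_nat_gt ((B - A) / δ)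
  have hN0 : (0:ℝ) < N := lt_of_le_of_lt (le_of_lt (div_pos hBA hδ)) hNgt
  have hNne : (N:ℝ) ≠ 0 := hN0.ne'
  set Δ : ℝ := (B - A) / N with hΔ
  have hΔpos : 0 < Δ := div_pos hBA hN0
  have hΔδ : Δ < δ := by
    rw [hΔ, div_lt_iff₀ hN0]
    rw [div_lt_iff₀ hδ] at hNgt
    linarith [hNgt]
  set t : ℕ → ℝ := fun i => A + i * Δ with ht
  have htstep : ∀ i : ℕ, t (i + 1) - t i = Δ := by
    intro i
    show (A + ((i : ℕ) + 1 : ℕ) * Δ) - (A + (i : ℕ) * Δ) = Δ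
    push_cast; ring
  have htmono : ∀ i : ℕ, t i ≤ t (i + 1) := fun i => by
    have := htstep i; linarith
  have ht0 : t 0 = A := by show A + (0:ℕ) * Δ = A; simp
  have hNΔ : (N:ℝ) * Δ = B - A := by
    rw [hΔ, mul_comm, div_mul_cancel₀ _ hNne]
  have htN : t N = B := by
    show A + (N:ℝ) * Δ = B
    rw [hNΔ]; ring
  set ε' : ℝ := ε / (N * (Mφ + 1)) with hε'def
  have hε'pos : 0 < ε' := by
    rw [hε'def]; positivity
  -- eventual closeness on each subinterval
  have hev : ∀ᶠ n in atTop, ∀ i ∈ Finset.range N,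
      |(∫ y in t i..t (i + 1), G ((y - x) / hn n)) - Δ * m| ≤ ε' := by
    rw [eventually_all_finset]
    intro i _
    have htd := tendsto_intervalIntegral_comp_div_sub hGm hC hper hpos h0 x (t i) (t (i + 1))
    rw [htstep i] at htd
    have := htd (Metric.closedBall_mem_nhds (Δ * m) hε'pos)
    rw [Filter.mem_map] at this
    refine Filter.eventually_iff_exists_mem.mpr ⟨_, this, fun n hmem => ?_⟩
    have : dist (∫ y in t i..t (i + 1), G ((y - x) / hn n)) (Δ * m) ≤ ε' := hmem
    rwa [Real.dist_eq] at this
  filter_upwards [hev] with n hn'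
  -- split into subintervals
  have hsplit : (∫ y, G ((y - x) / hn n) * φ y)
      = ∑ i ∈ Finset.range N, ∫ y in t i..t (i + 1), G ((y - x) / hn n) * φ y := by
    rw [hred _ (fun y hy => by rw [hsupp y hy, mul_zero]), ← ht0, ← htN]
    exact (intervalIntegral.sum_integral_adjacent_intervals
      (fun i _ => hprod_int n (t i) (t (i + 1)))).symm
  have hsplitφ : (∫ y, φ y) = ∑ i ∈ Finset.range N, ∫ y in t i..t (i + 1), φ y := by
    rw [hred _ hsupp, ← ht0, ← htN]
    exact (intervalIntegral.sum_integral_adjacent_intervals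
      (fun i _ => hφc.intervalIntegrable _ _)).symm
  rw [hsplit, hsplitφ, Finset.sum_mul, ← Finset.sum_sub_distrib]
  -- per-piece bound
  have hpiece : ∀ i ∈ Finset.range N,
      |(∫ y in t i..t (i + 1), G ((y - x) / hn n) * φ y)
        - (∫ y in t i..t (i + 1), φ y) * m|
      ≤ (C * ε * Δ + |m| * (ε * Δ)) + Mφ * ε' := by
    intro i hi
    set c : ℝ := φ (t i) with hc
    set I : ℝ := ∫ y in t i..t (i + 1), G ((y - x) / hn n) * φ y with hI
    set Eg : ℝ := ∫ y in t i..t (i + 1), G ((y - x) / hn n) with hEg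
    set Fφ : ℝ := ∫ y in t i..t (i + 1), φ y with hFφ
    have hptε : ∀ y ∈ Set.uIoc (t i) (t (i + 1)), |φ y - c| ≤ ε := by
      intro y hy
      rw [Set.uIoc_of_le (htmono i)] at hy
      have hdist : dist y (t i) < δ := by
        rw [Real.dist_eq, abs_of_pos (by linarith [hy.1])]
        have := htstep i
        have := hy.2
        linarith
      have := hδφ hdist
      rw [Real.dist_eq] at this
      exact this.le
    -- bound 1
    have b1 : |I - Eg * c| ≤ C * ε * Δ := by
      have heq : I - Eg * c = ∫ y in t i..t (i + 1), G ((y - x) / hn n) * (φ y - c) := by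
        have : (∫ y in t i..t (i + 1), G ((y - x) / hn n) * (φ y - c))
            = (∫ y in t i..t (i + 1),
                (G ((y - x) / hn n) * φ y - G ((y - x) / hn n) * c)) := by
          congr 1; funext y; ring
        rw [this, intervalIntegral.integral_sub (hprod_int n _ _)
            ((hGn_int n _ _).mul_const c), intervalIntegral.integral_mul_const]
      rw [heq]
      have := intervalIntegral.norm_integral_le_of_norm_le_const
        (a := t i) (b := t (i + 1)) (C := C * ε)
        (f := fun y => G ((y - x) / hn n) * (φ y - c))
        (fun y hy => by
          rw [Real.norm_eq_abs, abs_mul]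
          exact mul_le_mul (hC _) (hptε y hy) (abs_nonneg _) hC0)
      rwa [Real.norm_eq_abs, htstep i, abs_of_pos hΔpos] at this
    -- bound 2
    have b2 : |c * (Eg - Δ * m)| ≤ Mφ * ε' := by
      rw [abs_mul]
      exact mul_le_mul (hMφ _) (hn' i hi) (abs_nonneg _) hMφ0
    -- bound 3
    have b3 : |m * (c * Δ - Fφ)| ≤ |m| * (ε * Δ) := by
      rw [abs_mul]
      apply mul_le_mul_of_nonneg_left _ (abs_nonneg m)
      have heq : c * Δ - Fφ = ∫ y in t i..t (i + 1), (c - φ y) := by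
        rw [intervalIntegral.integral_sub intervalIntegrable_const
          (hφc.intervalIntegrable _ _), intervalIntegral.integral_const, htstep i,
          smul_eq_mul, hFφ]
        ring
      rw [heq]
      have := intervalIntegral.norm_integral_le_of_norm_le_const
        (a := t i) (b := t (i + 1)) (C := ε)
        (f := fun y => c - φ y)
        (fun y hy => by
          rw [Real.norm_eq_abs, abs_sub_comm]
          exact hptε y hy)
      rwa [Real.norm_eq_abs, htstep i, abs_of_pos hΔpos] at this
    have hdecomp : I - Fφ * m = (I - Eg * c) + c * (Eg - Δ * m) + m * (c * Δ - Fφ) := by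
      ring
    rw [hdecomp]
    calc |(I - Eg * c) + c * (Eg - Δ * m) + m * (c * Δ - Fφ)|
        ≤ |(I - Eg * c) + c * (Eg - Δ * m)| + |m * (c * Δ - Fφ)| := abs_add_le _ _
      _ ≤ |I - Eg * c| + |c * (Eg - Δ * m)| + |m * (c * Δ - Fφ)| := by
          have := abs_add_le (I - Eg * c) (c * (Eg - Δ * m))
          linarith
      _ ≤ (C * ε * Δ + |m| * (ε * Δ)) + Mφ * ε' := by linarith [b1, b2, b3]
  -- sum up
  calc |∑ i ∈ Finset.range N,
        ((∫ y in t i..t (i + 1), G ((y - x) / hn n) * φ y)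
          - (∫ y in t i..t (i + 1), φ y) * m)|
      ≤ ∑ i ∈ Finset.range N,
        |(∫ y in t i..t (i + 1), G ((y - x) / hn n) * φ y)
          - (∫ y in t i..t (i + 1), φ y) * m| := Finset.abs_sum_le_sum_abs _ _
    _ ≤ ∑ _i ∈ Finset.range N, ((C * ε * Δ + |m| * (ε * Δ)) + Mφ * ε') :=
        Finset.sum_le_sum hpiece
    _ = N * ((C * ε * Δ + |m| * (ε * Δ)) + Mφ * ε') := by
        rw [Finset.sum_const, Finset.card_range, nsmul_eq_mul]
    _ ≤ ((C + |m|) * (B - A) + 1) * ε := by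
        have e1 : (N:ℝ) * (C * ε * Δ + |m| * (ε * Δ)) = (C + |m|) * (B - A) * ε := by
          rw [← hNΔ]; ring
        have e2 : (N:ℝ) * (Mφ * ε') ≤ ε := by
          rw [hε'def]
          rw [div_eq_mul_inv, mul_inv]
          have hN0' : (0:ℝ) < (N:ℝ) := hN0
          have hM1 : (0:ℝ) < Mφ + 1 := by linarith
          calc (N:ℝ) * (Mφ * (ε * ((N:ℝ)⁻¹ * (Mφ + 1)⁻¹)))
              = ε * (Mφ * (Mφ + 1)⁻¹) * ((N:ℝ) * (N:ℝ)⁻¹) := by ring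
            _ = ε * (Mφ * (Mφ + 1)⁻¹) := by rw [mul_inv_cancel₀ hNne, mul_one]
            _ ≤ ε * 1 := by
                apply mul_le_mul_of_nonneg_left _ hε.le
                rw [← div_eq_mul_inv]
                exact (div_le_one hM1).mpr (by linarith)
            _ = ε := mul_one ε
        have : (N:ℝ) * ((C * ε * Δ + |m| * (ε * Δ)) + Mφ * ε')
            = (N:ℝ) * (C * ε * Δ + |m| * (ε * Δ)) + (N:ℝ) * (Mφ * ε') := by ring
        rw [this, e1]
        linarith

/-- Equidistribution against an arbitrary integrable density. -/
lemma tendsto_integral_comp_div_mul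
    (hGm : Measurable G) (hC : ∀ y, |G y| ≤ C) (hper : Function.Periodic G (2 * π))
    (hpos : ∀ n, 0 < hn n) (h0 : Tendsto hn atTop (nhds 0)) (x : ℝ)
    {f : ℝ → ℝ} (hf : Integrable f) :
    Tendsto (fun n => ∫ y, G ((y - x) / hn n) * f y) atTop
      (nhds ((∫ y, f y) * ((∫ y in (0:ℝ)..(2 * π), G y) / (2 * π)))) := by
  have hC0 : 0 ≤ C := le_trans (abs_nonneg _) (hC 0)
  set m : ℝ := (∫ y in (0:ℝ)..(2 * π), G y) / (2 * π) with hm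
  have hGnm : ∀ n, Measurable fun y => G ((y - x) / hn n) := fun n =>
    hGm.comp ((measurable_id.sub_const x).div_const _)
  have hGn_bdd : ∀ n, ∃ D, ∀ y, ‖G ((y - x) / hn n)‖ ≤ D := fun n =>
    ⟨C, fun y => by rw [Real.norm_eq_abs]; exact hC _⟩
  have hint : ∀ n (ψ : ℝ → ℝ), Integrable ψ →
      Integrable (fun y => G ((y - x) / hn n) * ψ y) := fun n ψ hψ =>
    hψ.bdd_mul (c := C) (hGnm n).aestronglyMeasurable
      (ae_of_all _ fun y => by rw [Real.norm_eq_abs]; exact hC _)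
  apply tendsto_of_forall_eventually_abs_le (K := C + |m| + 1)
  intro ε hε
  obtain ⟨φ, hφs, hφL1, hφc, hφint⟩ := hf.exists_hasCompactSupport_integral_sub_le hε
  have hmid := tendsto_integral_comp_div_mul_cont hGm hC hper hpos h0 x hφc hφs
  rw [← hm] at hmid
  have hmidev : ∀ᶠ n in atTop,
      |(∫ y, G ((y - x) / hn n) * φ y) - (∫ y, φ y) * m| ≤ ε := by
    have := hmid (Metric.closedBall_mem_nhds _ hε)
    rw [Filter.mem_map] at this
    refine Filter.eventually_iff_exists_mem.mpr ⟨_, this, fun n hmem => ?_⟩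
    have h2 : dist (∫ y, G ((y - x) / hn n) * φ y) ((∫ y, φ y) * m) ≤ ε := hmem
    rwa [Real.dist_eq] at h2
  filter_upwards [hmidev] with n hmidn
  have hint1 := hint n f hf
  have hint2 := hint n φ hφint
  have e1 : (∫ y, G ((y - x) / hn n) * f y) - (∫ y, G ((y - x) / hn n) * φ y)
      = ∫ y, G ((y - x) / hn n) * (f y - φ y) := by
    rw [← integral_sub hint1 hint2]
    congr 1; funext y; ring
  have b1 : |(∫ y, G ((y - x) / hn n) * f y) - (∫ y, G ((y - x) / hn n) * φ y)| ≤ C * ε := by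
    rw [e1]
    have hg_int : Integrable (fun y => C * ‖f y - φ y‖) :=
      ((hf.sub hφint).norm).const_mul C
    have hb := norm_integral_le_of_norm_le
      (f := fun y => G ((y - x) / hn n) * (f y - φ y)) hg_int
      (Filter.Eventually.of_forall fun y => by
        rw [Real.norm_eq_abs, Real.norm_eq_abs, abs_mul]
        exact mul_le_mul_of_nonneg_right (hC _) (abs_nonneg _))
    rw [Real.norm_eq_abs] at hb
    calc |∫ y, G ((y - x) / hn n) * (f y - φ y)| ≤ ∫ y, C * ‖f y - φ y‖ := hb
      _ = C * ∫ y, ‖f y - φ y‖ := integral_const_mul C _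
      _ ≤ C * ε := mul_le_mul_of_nonneg_left hφL1 hC0
  have b3 : |(∫ y, φ y) * m - (∫ y, f y) * m| ≤ |m| * ε := by
    have e3 : (∫ y, φ y) - (∫ y, f y) = ∫ y, (φ y - f y) := (integral_sub hφint hf).symm
    have hb : |(∫ y, φ y) - (∫ y, f y)| ≤ ε := by
      rw [e3]
      calc |∫ y, (φ y - f y)| ≤ ∫ y, ‖φ y - f y‖ := by
            have := norm_integral_le_integral_norm (μ := (volume : Measure ℝ))
              (fun y => φ y - f y)
            rwa [Real.norm_eq_abs] at this
        _ = ∫ y, ‖f y - φ y‖ := by congr 1; funext y; rw [norm_sub_rev]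
        _ ≤ ε := hφL1
    calc |(∫ y, φ y) * m - (∫ y, f y) * m| = |m * ((∫ y, φ y) - (∫ y, f y))| := by
          rw [show (∫ y, φ y) * m - (∫ y, f y) * m
            = m * ((∫ y, φ y) - (∫ y, f y)) from by ring]
      _ = |m| * |(∫ y, φ y) - (∫ y, f y)| := abs_mul _ _
      _ ≤ |m| * ε := mul_le_mul_of_nonneg_left hb (abs_nonneg m)
  calc |(∫ y, G ((y - x) / hn n) * f y) - (∫ y, f y) * m|
      = |((∫ y, G ((y - x) / hn n) * f y) - (∫ y, G ((y - x) / hn n) * φ y))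
        + ((∫ y, G ((y - x) / hn n) * φ y) - (∫ y, φ y) * m)
        + ((∫ y, φ y) * m - (∫ y, f y) * m)| := by
          rw [show (∫ y, G ((y - x) / hn n) * f y) - (∫ y, f y) * m
            = ((∫ y, G ((y - x) / hn n) * f y) - (∫ y, G ((y - x) / hn n) * φ y))
              + ((∫ y, G ((y - x) / hn n) * φ y) - (∫ y, φ y) * m)
              + ((∫ y, φ y) * m - (∫ y, f y) * m) from by ring]
    _ ≤ |(∫ y, G ((y - x) / hn n) * f y) - (∫ y, G ((y - x) / hn n) * φ y)|
        + |(∫ y, G ((y - x) / hn n) * φ y) - (∫ y, φ y) * m|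
        + |(∫ y, φ y) * m - (∫ y, f y) * m| := by
          have h1 := abs_add_le (((∫ y, G ((y - x) / hn n) * f y)
            - (∫ y, G ((y - x) / hn n) * φ y))
            + ((∫ y, G ((y - x) / hn n) * φ y) - (∫ y, φ y) * m))
            ((∫ y, φ y) * m - (∫ y, f y) * m)
          have h2 := abs_add_le ((∫ y, G ((y - x) / hn n) * f y)
            - (∫ y, G ((y - x) / hn n) * φ y))
            ((∫ y, G ((y - x) / hn n) * φ y) - (∫ y, φ y) * m)
          linarith
    _ ≤ C * ε + ε + |m| * ε := by linarith [b1, hmidn, b3]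
    _ = (C + |m| + 1) * ε := by ring

end Equidistribution

/-- If `Y` has a density and `hₙ → 0` (`hₙ > 0`), then `(Y - x)/hₙ mod 2π` converges in
distribution to the uniform distribution on `[0, 2π]`. -/
theorem statement15
    {Ω : Type*} [MeasurableSpace Ω] (P : Measure Ω) [IsProbabilityMeasure P]
    (Y : Ω → ℝ) (hY_meas : Measurable Y) (hY_pdf : HasPDF Y P volume)
    (hn : ℕ → ℝ) (hhn_pos : ∀ n, 0 < hn n) (hhn0 : Tendsto hn atTop (nhds 0))
    (x : ℝ) :
    ∀ g : BoundedContinuousFunction ℝ ℝ,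
      Tendsto (fun n : ℕ => ∫ ω, g (mod2pi ((Y ω - x) / hn n)) ∂P)
        atTop (nhds (∫ y, g y ∂uniformTwoPi)) := by
  haveI := hY_pdf
  intro g
  set G : ℝ → ℝ := fun w => g (mod2pi w) with hG
  have hGm : Measurable G := g.continuous.measurable.comp measurable_mod2pi
  have hC : ∀ y, |G y| ≤ ‖g‖ := fun y => by
    have := g.norm_coe_le_norm (mod2pi y)
    rwa [Real.norm_eq_abs] at this
  have hper : Function.Periodic G (2 * π) := fun w => congrArg g (periodic_mod2pi w)
  set fY : ℝ → ℝ := fun y => (pdf Y P volume y).toReal with hfY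
  have hpdf_meas : Measurable (pdf Y P volume) := measurable_pdf Y P volume
  have hlint : ∫⁻ y, pdf Y P volume y = 1 := by
    rw [pdf.lintegral_eq_measure_univ]; exact measure_univ
  have hlint_ne : ∫⁻ y, pdf Y P volume y ≠ ⊤ := by
    rw [hlint]; exact ENNReal.one_ne_top
  have hfYint : Integrable fY :=
    integrable_toReal_of_lintegral_ne_top hpdf_meas.aemeasurable hlint_ne
  have hfY1 : (∫ y, fY y) = 1 := by
    rw [hfY]
    rw [integral_toReal hpdf_meas.aemeasurable (ae_lt_top hpdf_meas hlint_ne), hlint]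
    simp
  -- representation of the expectation as an integral against the density
  have hrepr : ∀ n, (∫ ω, g (mod2pi ((Y ω - x) / hn n)) ∂P)
      = ∫ y, G ((y - x) / hn n) * fY y := by
    intro n
    have hmeas : AEStronglyMeasurable (fun y : ℝ => G ((y - x) / hn n)) volume :=
      (hGm.comp ((measurable_id.sub_const x).div_const _)).aestronglyMeasurable
    calc (∫ ω, g (mod2pi ((Y ω - x) / hn n)) ∂P)
        = ∫ ω, (fun y : ℝ => G ((y - x) / hn n)) (Y ω) ∂P := rfl
      _ = ∫ y, (pdf Y P volume y).toReal • (fun y : ℝ => G ((y - x) / hn n)) y :=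
          (pdf.integral_pdf_smul hmeas).symm
      _ = ∫ y, G ((y - x) / hn n) * fY y := by
          apply integral_congr_ae
          exact Filter.Eventually.of_forall fun y => by
            simp only [smul_eq_mul, hfY]
            ring
  -- identification of the limit value
  have hne2pi : ∀ᵐ y : ℝ, y ≠ 2 * π := by
    rw [ae_iff]
    have h1 : {y : ℝ | ¬y ≠ 2 * π} = {2 * π} := by
      ext y; simp [not_not, Set.mem_singleton_iff]
    rw [h1]
    exact measure_singleton _
  have hval : (∫ y, g y ∂uniformTwoPi) = (∫ y in (0:ℝ)..(2 * π), G y) / (2 * π) := by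
    unfold uniformTwoPi
    rw [integral_smul_measure, integral_Icc_eq_integral_Ioc]
    have h1 : (∫ y in Set.Ioc 0 (2 * π), g y) = ∫ y in Set.Ioc 0 (2 * π), G y := by
      apply setIntegral_congr_ae measurableSet_Ioc
      filter_upwards [hne2pi] with y hy hyIoc
      rw [hG]
      simp only
      rw [mod2pi_eq_self hyIoc.1.le (lt_of_le_of_ne hyIoc.2 hy)]
    rw [h1, ← intervalIntegral.integral_of_le Real.two_pi_pos.le,
      ENNReal.toReal_inv, ENNReal.toReal_ofReal Real.two_pi_pos.le, smul_eq_mul]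
    rw [div_eq_inv_mul]
  have hmain := tendsto_integral_comp_div_mul hGm hC hper hhn_pos hhn0 x hfYint
  rw [hfY1, one_mul] at hmain
  rw [hval]
  exact hmain.congr fun n => (hrepr n).symm
end
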